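/- Let H be a complex inner product space, let F, T, and U be unitary operators on H, and let α, β be real numbers with F ∘ U = exp(iα) · (U ∘ F) and T ∘ U = exp(iβ) · (U ∘ T). Suppose ψ ∈ H is a nonzero vector with (F ∘ T)ψ = cψ for some complex number c, and suppose ⟪ψ, Uψ⟫ ≠ 0. Then exp(i(α + β)) = 1. -/

import Mathlib

/-- Filling-enforced constraint on the torus (IQHE): if unitaries `F`, `T`, `U` satisfy
`F ∘ U = exp(iα)·(U ∘ F)` and `T ∘ U = exp(iβ)·(U ∘ T)`, the nonzero state `ψ` is an
eigenvector of the effective magnetic translation `F ∘ T`, and `⟪ψ, Uψ⟫ ≠ 0`, then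
`exp(i(α + β)) = 1`. -/
theorem filling_enforced_constraint_torus
    {H : Type*} [NormedAddCommGroup H] [InnerProductSpace ℂ H]
    (F T U : H ≃ₗᵢ[ℂ] H) (α β : ℝ)
    (hFU : ∀ x : H, F (U x) = Complex.exp (Complex.I * (α : ℂ)) • U (F x))
    (hTU : ∀ x : H, T (U x) = Complex.exp (Complex.I * (β : ℂ)) • U (T x))
    (ψ : H) (hψ : ψ ≠ 0) (c : ℂ) (hFTψ : F (T ψ) = c • ψ)
    (hz : (inner ℂ ψ (U ψ) : ℂ) ≠ 0) :
    Complex.exp (Complex.I * ((α : ℂ) + (β : ℂ))) = 1 := by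
  have hψn : ‖ψ‖ ≠ 0 := norm_ne_zero_iff.mpr hψ
  have hn : ‖c‖ * ‖ψ‖ = 1 * ‖ψ‖ := by
    rw [← norm_smul, ← hFTψ, F.norm_map, T.norm_map, one_mul]
  have hcn : ‖c‖ = 1 := mul_right_cancel₀ hψn hn
  have hc : (starRingEnd ℂ) c * c = 1 := by
    rw [Complex.conj_mul', hcn]
    norm_num
  have h1 : (inner ℂ (F (T ψ)) (F (T (U ψ))) : ℂ) = inner ℂ ψ (U ψ) := by
    rw [F.inner_map_map, T.inner_map_map]
  have h2 : F (T (U ψ)) = Complex.exp (Complex.I * ((α : ℂ) + (β : ℂ))) • (c • U ψ) := by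
    rw [hTU, map_smul, hFU, hFTψ, map_smul, smul_smul, smul_smul, smul_smul]
    congr 1
    rw [← Complex.exp_add]
    ring_nf
  rw [h2, hFTψ, inner_smul_left, inner_smul_right, inner_smul_right] at h1
  have key : Complex.exp (Complex.I * ((α : ℂ) + (β : ℂ))) * inner ℂ ψ (U ψ)
      = 1 * inner ℂ ψ (U ψ) := by
    calc Complex.exp (Complex.I * ((α : ℂ) + (β : ℂ))) * inner ℂ ψ (U ψ)
        = ((starRingEnd ℂ) c * c) * (Complex.exp (Complex.I * ((α : ℂ) + (β : ℂ))) * inner ℂ ψ (U ψ)) := by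
          rw [hc, one_mul]
      _ = (starRingEnd ℂ) c * (Complex.exp (Complex.I * ((α : ℂ) + (β : ℂ))) * (c * inner ℂ ψ (U ψ))) := by ring
      _ = inner ℂ ψ (U ψ) := h1
      _ = 1 * inner ℂ ψ (U ψ) := (one_mul _).symm
  exact mul_right_cancel₀ hz key
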